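/- Let d ≥ 3 be an integer and let f ∈ C[x,y,z] be given by f = xz·((xz)^{m−1} + y^{2m−2}) if d = 2m is even (m ≥ 2) and by f = x·((xz)^m + y^{2m}) if d = 2m + 1 is odd (m ≥ 1). Then the S-module AR(f) of Jacobian syzygies of f is a free S-module of rank 2, admitting a basis consisting of two homogeneous syzygies, one of degree 1 and one of degree d − 2. -/

import Mathlib

open MvPolynomial

/-- The Jacobian map sending a triple `(a,b,c)` to `a·f_x + b·f_y + c·f_z`. -/
noncomputable def jacMap (f : MvPolynomial (Fin 3) ℂ) :
    (Fin 3 → MvPolynomial (Fin 3) ℂ) →ₗ[MvPolynomial (Fin 3) ℂ] MvPolynomial (Fin 3) ℂ where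
  toFun v := ∑ i, v i * pderiv i f
  map_add' a b := by simp [add_mul, Finset.sum_add_distrib]
  map_smul' c a := by simp [Finset.mul_sum, mul_assoc]

/-- The module of Jacobian syzygies `AR(f)`. -/
noncomputable def AR (f : MvPolynomial (Fin 3) ℂ) :
    Submodule (MvPolynomial (Fin 3) ℂ) (Fin 3 → MvPolynomial (Fin 3) ℂ) :=
  LinearMap.ker (jacMap f)

local notation "S" => MvPolynomial (Fin 3) ℂ

private lemma primeX (i : Fin 3) : Prime (X i : S) := by
  rw [← MulEquiv.prime_iff (e := ((renameEquiv ℂ (Equiv.swap i 0)).trans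
      (finSuccEquiv ℂ 2)).toRingEquiv.toMulEquiv)]
  have h : (((renameEquiv ℂ (Equiv.swap i 0)).trans
      (finSuccEquiv ℂ 2)).toRingEquiv.toMulEquiv) (X i) = Polynomial.X := by
    simp [finSuccEquiv_X_zero]
  rw [h]
  exact Polynomial.prime_X

private lemma not_dvd_of_map_ne (i : Fin 3) (φ : S →ₐ[ℂ] S) (hi : φ (X i) = 0)
    (p : S) (h : φ p ≠ 0) : ¬ (X i : S) ∣ p := by
  rintro ⟨q, rfl⟩
  exact h (by rw [map_mul, hi, zero_mul])

private lemma pdSelf (i : Fin 3) (n : ℕ) :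
    pderiv i ((X i : S) ^ (n + 1)) = ((n : S) + 1) * X i ^ n := by
  rw [pderiv_pow, pderiv_X_self, mul_one, Nat.add_sub_cancel]
  push_cast
  ring

private lemma pdNe {i j : Fin 3} (h : j ≠ i) (n : ℕ) :
    pderiv i ((X j : S) ^ n) = 0 := by
  rw [pderiv_pow, pderiv_X_of_ne h, mul_zero]

private lemma mem_AR_iff (f : MvPolynomial (Fin 3) ℂ) (w : Fin 3 → MvPolynomial (Fin 3) ℂ) :
    w ∈ AR f ↔ w 0 * pderiv 0 f + w 1 * pderiv 1 f + w 2 * pderiv 2 f = 0 := by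
  rw [AR, LinearMap.mem_ker]
  show (∑ i, w i * pderiv i f) = 0 ↔ _
  rw [Fin.sum_univ_three]

private lemma basis_pair {M : Type*} [AddCommGroup M] [Module S M]
    (e₁ e₂ : M)
    (hind : ∀ s t : S, s • e₁ + t • e₂ = 0 → s = 0 ∧ t = 0)
    (hspan : ∀ v : M, ∃ s t : S, s • e₁ + t • e₂ = v) :
    ∃ B : Module.Basis (Fin 2) S M, B 0 = e₁ ∧ B 1 = e₂ := by
  have li : LinearIndependent S ![e₁, e₂] := LinearIndependent.pair_iff.mpr hind
  have hr : Set.range ![e₁, e₂] = {e₁, e₂} := by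
    ext w
    simp [Fin.exists_fin_two, or_comm]
  have hsp : ⊤ ≤ Submodule.span S (Set.range ![e₁, e₂]) := by
    intro v _
    rw [hr, Submodule.mem_span_pair]
    exact hspan v
  refine ⟨Module.Basis.mk li hsp, ?_, ?_⟩ <;> simp

private lemma homog_adj {p : S} {a b : ℕ} (h : p.IsHomogeneous a) (e : a = b) :
    p.IsHomogeneous b := e ▸ h

private lemma natS_ne (n : ℕ) (h : n ≠ 0) : (n : S) ≠ 0 := by
  rw [show ((n : S)) = C ((n : ℕ) : ℂ) from (map_natCast (C : ℂ →+* S) n).symm]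
  rw [C_ne_zero]
  exact_mod_cast h

set_option maxHeartbeats 2000000 in
theorem stmt13 (d m : ℕ) (f : MvPolynomial (Fin 3) ℂ) (hd : 3 ≤ d)
    (hf : (d = 2 * m ∧ 2 ≤ m ∧ f = X 0 * X 2 * ((X 0 * X 2) ^ (m - 1) + X 1 ^ (2 * m - 2))) ∨
          (d = 2 * m + 1 ∧ 1 ≤ m ∧ f = X 0 * ((X 0 * X 2) ^ m + X 1 ^ (2 * m)))) :
    ∃ B : Module.Basis (Fin 2) (MvPolynomial (Fin 3) ℂ) (AR f),
      (∀ i, ((B 0).1 i).IsHomogeneous 1) ∧ (∀ i, ((B 1).1 i).IsHomogeneous (d - 2)) := by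
  have h10 : (1 : Fin 3) ≠ 0 := by decide
  have h20 : (2 : Fin 3) ≠ 0 := by decide
  have h01 : (0 : Fin 3) ≠ 1 := by decide
  have h21 : (2 : Fin 3) ≠ 1 := by decide
  have h02 : (0 : Fin 3) ≠ 2 := by decide
  have h12 : (1 : Fin 3) ≠ 2 := by decide
  obtain ⟨hd2m, hm, hfe⟩ | ⟨hd2m, hm, hfe⟩ := hf
  · -- even case: f = x^(k+2) z^(k+2) + x z y^(2k+2), with m = k+2
    obtain ⟨k, rfl⟩ : ∃ k, m = k + 2 := ⟨m - 2, by omega⟩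
    have hdd : d - 2 = 2 * k + 1 + 1 := by omega
    have hf' : f = X 0 ^ (k+1+1) * X 2 ^ (k+1+1) + X 0 * X 1 ^ (2*k+1+1) * X 2 := by
      rw [hfe, show k + 2 - 1 = k + 1 from rfl, show 2*(k+2) - 2 = 2*k+1+1 by omega]
      ring
    set g : S := ((k:S)+2) * X 0 ^ (k+1) * X 2 ^ (k+1) + X 1 ^ (2*k+1+1) with hgdef
    have hp0 : pderiv 0 f = X 2 * g := by
      rw [hf', hgdef]
      simp only [map_add, pderiv_mul, pdSelf, pdNe h10, pdNe h20, pdNe h01, pdNe h21,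
        pdNe h02, pdNe h12, pderiv_X_self, pderiv_X_of_ne h10, pderiv_X_of_ne h20,
        pderiv_X_of_ne h01, pderiv_X_of_ne h21, pderiv_X_of_ne h02, pderiv_X_of_ne h12,
        mul_zero, zero_mul, add_zero, zero_add, mul_one, one_mul]
      push_cast
      ring
    have hp1 : pderiv 1 f = (2*(k:S)+2) * (X 0 * X 1 ^ (2*k+1) * X 2) := by
      rw [hf']
      simp only [map_add, pderiv_mul, pdSelf, pdNe h10, pdNe h20, pdNe h01, pdNe h21,
        pdNe h02, pdNe h12, pderiv_X_self, pderiv_X_of_ne h10, pderiv_X_of_ne h20,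
        pderiv_X_of_ne h01, pderiv_X_of_ne h21, pderiv_X_of_ne h02, pderiv_X_of_ne h12,
        mul_zero, zero_mul, add_zero, zero_add, mul_one, one_mul]
      push_cast
      ring
    have hp2 : pderiv 2 f = X 0 * g := by
      rw [hf', hgdef]
      simp only [map_add, pderiv_mul, pdSelf, pdNe h10, pdNe h20, pdNe h01, pdNe h21,
        pdNe h02, pdNe h12, pderiv_X_self, pderiv_X_of_ne h10, pderiv_X_of_ne h20,
        pderiv_X_of_ne h01, pderiv_X_of_ne h21, pderiv_X_of_ne h02, pderiv_X_of_ne h12,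
        mul_zero, zero_mul, add_zero, zero_add, mul_one, one_mul]
      push_cast
      ring
    -- non-divisibility facts
    have hgx : ¬ (X 0 : S) ∣ g := by
      refine not_dvd_of_map_ne 0 (aeval ![0, X 1, X 2]) (by simp) g ?_
      have : (aeval ![(0:S), X 1, X 2]) g = X 1 ^ (2*k+1+1) := by
        rw [hgdef]
        simp [map_ofNat]
      rw [this]
      exact pow_ne_zero _ (X_ne_zero _)
    have hgz : ¬ (X 2 : S) ∣ g := by
      refine not_dvd_of_map_ne 2 (aeval ![X 0, X 1, 0]) (by simp) g ?_
      have : (aeval ![X 0, X 1, (0:S)]) g = X 1 ^ (2*k+1+1) := by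
        rw [hgdef]
        simp [map_ofNat]
      rw [this]
      exact pow_ne_zero _ (X_ne_zero _)
    have hgy : ¬ (X 1 : S) ∣ g := by
      refine not_dvd_of_map_ne 1 (aeval ![X 0, 0, X 2]) (by simp) g ?_
      have : (aeval ![X 0, (0:S), X 2]) g = ((k:S)+2) * X 0 ^ (k+1) * X 2 ^ (k+1) := by
        rw [hgdef]
        simp [map_ofNat]
      rw [this]
      have hk2 : ((k:S)+2) ≠ 0 := by
        have := natS_ne (k+2) (by omega)
        push_cast at this
        exact this
      exact mul_ne_zero (mul_ne_zero hk2 (pow_ne_zero _ (X_ne_zero _)))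
        (pow_ne_zero _ (X_ne_zero _))
    have hxz : ¬ (X 0 : S) ∣ (X 2 : S) := by
      refine not_dvd_of_map_ne 0 (aeval ![0, X 1, X 2]) (by simp) (X 2) ?_
      simp
    have hzx : ¬ (X 2 : S) ∣ (X 0 : S) := by
      refine not_dvd_of_map_ne 2 (aeval ![X 0, X 1, 0]) (by simp) (X 0) ?_
      simp
    have hgne : g ≠ 0 := by
      intro h0
      apply hgy
      rw [h0]
      exact dvd_zero _
    -- the two syzygies
    have he₁ : (![X 0, 0, -X 2] : Fin 3 → S) ∈ AR f := by
      rw [mem_AR_iff, hp0, hp1, hp2]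
      simp only [Matrix.cons_val_zero, Matrix.cons_val_one, Matrix.head_cons,
        Matrix.cons_val_two, Matrix.tail_cons]
      ring
    have he₂ : (![(2*(k:S)+2) * (X 0 * X 1 ^ (2*k+1)), -g, 0] : Fin 3 → S) ∈ AR f := by
      rw [mem_AR_iff, hp0, hp1, hp2]
      simp only [Matrix.cons_val_zero, Matrix.cons_val_one, Matrix.head_cons,
        Matrix.cons_val_two, Matrix.tail_cons]
      ring
    set E₁ : AR f := ⟨![X 0, 0, -X 2], he₁⟩ with hE₁
    set E₂ : AR f := ⟨![(2*(k:S)+2) * (X 0 * X 1 ^ (2*k+1)), -g, 0], he₂⟩ with hE₂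
    have hC : C ((2*(k:ℂ)+2)⁻¹) * (2*(k:S)+2) = 1 := by
      have h1 : (2*(k:S)+2) = C (2*(k:ℂ)+2) := by
        rw [show (2*(k:ℂ)+2) = ((2*k+2 : ℕ) : ℂ) by push_cast; ring, map_natCast]
        push_cast
        ring
      have h2 : (2*(k:ℂ)+2) ≠ 0 := by
        rw [show (2*(k:ℂ)+2) = ((2*k+2 : ℕ) : ℂ) by push_cast; ring]
        exact Nat.cast_ne_zero.mpr (by omega)
      rw [h1, ← map_mul, inv_mul_cancel₀ h2, map_one]
    obtain ⟨B, hB0, hB1⟩ := basis_pair E₁ E₂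
      (by
        intro s t h
        have h2 : s * (-X 2) + t * 0 = 0 := by
          have := congrArg (fun z : AR f => (z : Fin 3 → S) 2) h
          simpa [hE₁, hE₂, Matrix.cons_val_two, Matrix.tail_cons] using this
        have hs : s = 0 := by
          have : s * X 2 = 0 := by linear_combination -h2
          rcases mul_eq_zero.mp this with h' | h'
          · exact h'
          · exact absurd h' (X_ne_zero _)
        refine ⟨hs, ?_⟩
        have h1 : s * 0 + t * (-g) = 0 := by
          have := congrArg (fun z : AR f => (z : Fin 3 → S) 1) h
          simpa [hE₁, hE₂] using this
        have : t * g = 0 := by linear_combination -h1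
        rcases mul_eq_zero.mp this with h' | h'
        · exact h'
        · exact absurd h' hgne)
      (by
        intro w
        have hv : w.1 0 * (X 2 * g) + w.1 1 * ((2*(k:S)+2) * (X 0 * X 1 ^ (2*k+1) * X 2))
            + w.1 2 * (X 0 * g) = 0 := by
          have := (mem_AR_iff f w.1).mp w.2
          rwa [hp0, hp1, hp2] at this
        -- X 0 divides w 0
        obtain ⟨a₁, ha⟩ : (X 0 : S) ∣ w.1 0 := by
          have hdv : (X 0 : S) ∣ w.1 0 * (X 2 * g) :=
            ⟨-(w.1 1 * ((2*(k:S)+2) * (X 1 ^ (2*k+1) * X 2)) + w.1 2 * g), by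
              linear_combination hv⟩
          rcases (primeX 0).dvd_or_dvd hdv with h' | h'
          · exact h'
          · rcases (primeX 0).dvd_or_dvd h' with h'' | h''
            · exact absurd h'' hxz
            · exact absurd h'' hgx
        obtain ⟨c₁, hc⟩ : (X 2 : S) ∣ w.1 2 := by
          have hdv : (X 2 : S) ∣ w.1 2 * (X 0 * g) :=
            ⟨-(w.1 1 * ((2*(k:S)+2) * (X 0 * X 1 ^ (2*k+1))) + w.1 0 * g), by
              linear_combination hv⟩
          rcases (primeX 2).dvd_or_dvd hdv with h' | h'
          · exact h'
          · rcases (primeX 2).dvd_or_dvd h' with h'' | h''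
            · exact absurd h'' hzx
            · exact absurd h'' hgz
        have e2 : (X 0 * X 2 : S) * ((a₁+c₁)*g + (2*(k:S)+2) * w.1 1 * X 1 ^ (2*k+1))
            = (X 0 * X 2 : S) * 0 := by
          rw [mul_zero]
          linear_combination hv - X 2 * g * ha - X 0 * g * hc
        have E2 := mul_left_cancel₀ (mul_ne_zero (X_ne_zero _) (X_ne_zero _) : (X 0 * X 2 : S) ≠ 0) e2
        obtain ⟨t, ht⟩ : (X 1 : S) ^ (2*k+1) ∣ (a₁ + c₁) := by
          refine (primeX 1).pow_dvd_of_dvd_mul_right _ hgy ?_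
          exact ⟨-((2*(k:S)+2) * w.1 1), by linear_combination E2⟩
        have e3 : (X 1 : S) ^ (2*k+1) * ((2*(k:S)+2) * w.1 1 + t * g)
            = (X 1 : S) ^ (2*k+1) * 0 := by
          rw [mul_zero]
          linear_combination E2 - g * ht
        have hb := mul_left_cancel₀ (pow_ne_zero _ (X_ne_zero 1 : (X 1:S) ≠ 0)) e3
        refine ⟨-c₁, C ((2*(k:ℂ)+2)⁻¹) * t, ?_⟩
        apply Subtype.ext
        show (-c₁) • (![X 0, 0, -X 2] : Fin 3 → S)
            + (C ((2*(k:ℂ)+2)⁻¹) * t) • ![(2*(k:S)+2) * (X 0 * X 1 ^ (2*k+1)), -g, 0] = w.1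
        funext i
        fin_cases i
        · show (-c₁) * X 0
              + (C ((2*(k:ℂ)+2)⁻¹) * t) * ((2*(k:S)+2) * (X 0 * X 1 ^ (2*k+1))) = w.1 0
          linear_combination (-1 : S) * ha - X 0 * ht + t * X 0 * X 1 ^ (2*k+1) * hC
        · show (-c₁) * 0 + (C ((2*(k:ℂ)+2)⁻¹) * t) * (-g) = w.1 1
          linear_combination -(C ((2*(k:ℂ)+2)⁻¹)) * hb + w.1 1 * hC
        · show (-c₁) * (-X 2) + (C ((2*(k:ℂ)+2)⁻¹) * t) * 0 = w.1 2
          linear_combination -hc)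
    refine ⟨B, ?_, ?_⟩
    · rw [hB0]
      intro i
      fin_cases i
      · simpa [hE₁] using isHomogeneous_X ℂ (0 : Fin 3)
      · simpa [hE₁] using isHomogeneous_zero (Fin 3) ℂ 1
      · simpa [hE₁] using (isHomogeneous_X ℂ (2 : Fin 3)).neg
    · rw [hB1, hdd]
      intro i
      fin_cases i
      · show (((2*(k:S)+2) * (X 0 * X 1 ^ (2*k+1)))).IsHomogeneous (2*k+1+1)
        have h2 : (2*(k:S)+2) = C (2*(k:ℂ)+2) := by
          rw [show (2*(k:ℂ)+2) = ((2*k+2 : ℕ) : ℂ) by push_cast; ring, map_natCast]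
          push_cast
          ring
        rw [h2]
        exact homog_adj ((isHomogeneous_C (Fin 3) (2*(k:ℂ)+2)).mul
          ((isHomogeneous_X ℂ 0).mul ((isHomogeneous_X ℂ 1).pow (2*k+1)))) (by ring)
      · show (-g).IsHomogeneous (2*k+1+1)
        apply MvPolynomial.IsHomogeneous.neg
        rw [hgdef]
        apply MvPolynomial.IsHomogeneous.add
        · have h2 : ((k:S)+2) = C ((k:ℂ)+2) := by
            rw [show ((k:ℂ)+2) = ((k+2 : ℕ) : ℂ) by push_cast; ring, map_natCast]
            push_cast
            ring
          rw [h2, mul_assoc]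
          exact homog_adj ((isHomogeneous_C (Fin 3) ((k:ℂ)+2)).mul
            (((isHomogeneous_X ℂ 0).pow (k+1)).mul ((isHomogeneous_X ℂ 2).pow (k+1))))
            (by ring)
        · exact homog_adj ((isHomogeneous_X ℂ (1 : Fin 3)).pow (2*k+1+1)) (by ring)
      · show (0 : S).IsHomogeneous (2*k+1+1)
        exact isHomogeneous_zero (Fin 3) ℂ _
  · -- odd case: f = x^(k+2) z^(k+1) + x y^(2k+2), with m = k+1
    obtain ⟨k, rfl⟩ : ∃ k, m = k + 1 := ⟨m - 1, by omega⟩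
    have hdd : d - 2 = 2 * k + 1 := by omega
    have hf' : f = X 0 ^ (k+1+1) * X 2 ^ (k+1) + X 0 * X 1 ^ (2*k+1+1) := by
      rw [hfe, show 2*(k+1) = 2*k+1+1 by omega]
      ring
    set g : S := ((k:S)+2) * X 0 ^ (k+1) * X 2 ^ (k+1) + X 1 ^ (2*k+1+1) with hgdef
    have hp0 : pderiv 0 f = g := by
      rw [hf', hgdef]
      simp only [map_add, pderiv_mul, pdSelf, pdNe h10, pdNe h20, pdNe h01, pdNe h21,
        pdNe h02, pdNe h12, pderiv_X_self, pderiv_X_of_ne h10, pderiv_X_of_ne h20,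
        pderiv_X_of_ne h01, pderiv_X_of_ne h21, pderiv_X_of_ne h02, pderiv_X_of_ne h12,
        mul_zero, zero_mul, add_zero, zero_add, mul_one, one_mul]
      push_cast
      ring
    have hp1 : pderiv 1 f = (2*(k:S)+2) * (X 0 * X 1 ^ (2*k+1)) := by
      rw [hf']
      simp only [map_add, pderiv_mul, pdSelf, pdNe h10, pdNe h20, pdNe h01, pdNe h21,
        pdNe h02, pdNe h12, pderiv_X_self, pderiv_X_of_ne h10, pderiv_X_of_ne h20,
        pderiv_X_of_ne h01, pderiv_X_of_ne h21, pderiv_X_of_ne h02, pderiv_X_of_ne h12,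
        mul_zero, zero_mul, add_zero, zero_add, mul_one, one_mul]
      push_cast
      ring
    have hp2 : pderiv 2 f = ((k:S)+1) * (X 0 ^ (k+1+1) * X 2 ^ k) := by
      rw [hf']
      simp only [map_add, pderiv_mul, pdSelf, pdNe h10, pdNe h20, pdNe h01, pdNe h21,
        pdNe h02, pdNe h12, pderiv_X_self, pderiv_X_of_ne h10, pderiv_X_of_ne h20,
        pderiv_X_of_ne h01, pderiv_X_of_ne h21, pderiv_X_of_ne h02, pderiv_X_of_ne h12,
        mul_zero, zero_mul, add_zero, zero_add, mul_one, one_mul]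
      push_cast
      ring
    have hk22 : (2*(k:S)+2) ≠ 0 := by
      have := natS_ne (2*k+2) (by omega)
      push_cast at this
      exact this
    have hk1 : ((k:S)+1) ≠ 0 := by
      have := natS_ne (k+1) (by omega)
      push_cast at this
      exact this
    have hgx : ¬ (X 0 : S) ∣ g := by
      refine not_dvd_of_map_ne 0 (aeval ![0, X 1, X 2]) (by simp) g ?_
      have : (aeval ![(0:S), X 1, X 2]) g = X 1 ^ (2*k+1+1) := by
        rw [hgdef]
        simp [map_ofNat]
      rw [this]
      exact pow_ne_zero _ (X_ne_zero _)
    have hyc : ¬ (X 1 : S) ∣ (((k:S)+1) * (X 0 ^ (k+1) * X 2 ^ k)) := by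
      refine not_dvd_of_map_ne 1 (aeval ![X 0, 0, X 2]) (by simp)
        (((k:S)+1) * (X 0 ^ (k+1) * X 2 ^ k)) ?_
      have : (aeval ![X 0, (0:S), X 2]) (((k:S)+1) * (X 0 ^ (k+1) * X 2 ^ k))
          = ((k:S)+1) * (X 0 ^ (k+1) * X 2 ^ k) := by
        simp [map_ofNat]
      rw [this]
      exact mul_ne_zero hk1 (mul_ne_zero (pow_ne_zero _ (X_ne_zero _))
        (pow_ne_zero _ (X_ne_zero _)))
    have hgne : g ≠ 0 := by
      intro h0
      apply hgx
      rw [h0]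
      exact dvd_zero _
    have he₁ : (![(2*(k:S)+2) * X 0, -X 1, -((2*(k:S)+4) * X 2)] : Fin 3 → S) ∈ AR f := by
      rw [mem_AR_iff, hp0, hp1, hp2]
      simp only [Matrix.cons_val_zero, Matrix.cons_val_one, Matrix.head_cons,
        Matrix.cons_val_two, Matrix.tail_cons]
      rw [hgdef]
      push_cast
      ring
    have he₂ : (![0, X 0 ^ (k+1) * X 2 ^ k, -(2 * X 1 ^ (2*k+1))] : Fin 3 → S) ∈ AR f := by
      rw [mem_AR_iff, hp0, hp1, hp2]
      simp only [Matrix.cons_val_zero, Matrix.cons_val_one, Matrix.head_cons,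
        Matrix.cons_val_two, Matrix.tail_cons]
      push_cast
      ring
    set E₁ : AR f := ⟨![(2*(k:S)+2) * X 0, -X 1, -((2*(k:S)+4) * X 2)], he₁⟩ with hE₁
    set E₂ : AR f := ⟨![0, X 0 ^ (k+1) * X 2 ^ k, -(2 * X 1 ^ (2*k+1))], he₂⟩ with hE₂
    have hC : C ((2*(k:ℂ)+2)⁻¹) * (2*(k:S)+2) = 1 := by
      have h1 : (2*(k:S)+2) = C (2*(k:ℂ)+2) := by
        rw [show (2*(k:ℂ)+2) = ((2*k+2 : ℕ) : ℂ) by push_cast; ring, map_natCast]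
        push_cast
        ring
      have h2 : (2*(k:ℂ)+2) ≠ 0 := by
        rw [show (2*(k:ℂ)+2) = ((2*k+2 : ℕ) : ℂ) by push_cast; ring]
        exact Nat.cast_ne_zero.mpr (by omega)
      rw [h1, ← map_mul, inv_mul_cancel₀ h2, map_one]
    have hC2 : C ((4*(k:ℂ)+4)⁻¹) * (4*(k:S)+4) = 1 := by
      have h1 : (4*(k:S)+4) = C (4*(k:ℂ)+4) := by
        rw [show (4*(k:ℂ)+4) = ((4*k+4 : ℕ) : ℂ) by push_cast; ring, map_natCast]
        push_cast
        ring
      have h2 : (4*(k:ℂ)+4) ≠ 0 := by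
        rw [show (4*(k:ℂ)+4) = ((4*k+4 : ℕ) : ℂ) by push_cast; ring]
        exact Nat.cast_ne_zero.mpr (by omega)
      rw [h1, ← map_mul, inv_mul_cancel₀ h2, map_one]
    obtain ⟨B, hB0, hB1⟩ := basis_pair E₁ E₂
      (by
        intro s t h
        have hs : s = 0 := by
          have h0 : s * ((2*(k:S)+2) * X 0) + t * 0 = 0 := by
            have := congrArg (fun z : AR f => (z : Fin 3 → S) 0) h
            simpa [hE₁, hE₂] using this
          have : s * ((2*(k:S)+2) * X 0) = 0 := by linear_combination h0
          rcases mul_eq_zero.mp this with h' | h'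
          · exact h'
          · rcases mul_eq_zero.mp h' with h'' | h''
            · exact absurd h'' hk22
            · exact absurd h'' (X_ne_zero _)
        refine ⟨hs, ?_⟩
        have h1 : s * (-X 1) + t * (X 0 ^ (k+1) * X 2 ^ k) = 0 := by
          have := congrArg (fun z : AR f => (z : Fin 3 → S) 1) h
          simpa [hE₁, hE₂] using this
        rw [hs] at h1
        have : t * (X 0 ^ (k+1) * X 2 ^ k) = 0 := by linear_combination h1
        rcases mul_eq_zero.mp this with h' | h'
        · exact h'
        · exact absurd h' (mul_ne_zero (pow_ne_zero _ (X_ne_zero _))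
            (pow_ne_zero _ (X_ne_zero _))))
      (by
        intro w
        have hv : w.1 0 * g + w.1 1 * ((2*(k:S)+2) * (X 0 * X 1 ^ (2*k+1)))
            + w.1 2 * (((k:S)+1) * (X 0 ^ (k+1+1) * X 2 ^ k)) = 0 := by
          have := (mem_AR_iff f w.1).mp w.2
          rwa [hp0, hp1, hp2] at this
        obtain ⟨a₁, ha⟩ : (X 0 : S) ∣ w.1 0 := by
          have hdv : (X 0 : S) ∣ w.1 0 * g :=
            ⟨-((2*(k:S)+2) * w.1 1 * X 1 ^ (2*k+1)
              + ((k:S)+1) * w.1 2 * (X 0 ^ (k+1) * X 2 ^ k)), by linear_combination hv⟩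
          rcases (primeX 0).dvd_or_dvd hdv with h' | h'
          · exact h'
          · exact absurd h' hgx
        have e2 : (X 0 : S) * (a₁ * g + (2*(k:S)+2) * w.1 1 * X 1 ^ (2*k+1)
            + ((k:S)+1) * w.1 2 * (X 0 ^ (k+1) * X 2 ^ k)) = (X 0 : S) * 0 := by
          rw [mul_zero]
          linear_combination hv - g * ha
        have E2 := mul_left_cancel₀ (X_ne_zero (0 : Fin 3) : (X 0 : S) ≠ 0) e2
        have e3 : (2*(k:S)+2) * X 1 ^ (2*k+1) * ((2*(k:S)+2) * w.1 1 + a₁ * X 1)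
            + (((k:S)+1) * (X 0 ^ (k+1) * X 2 ^ k))
              * ((2*(k:S)+2) * w.1 2 + (2*(k:S)+4) * a₁ * X 2) = 0 := by
          linear_combination (2*(k:S)+2) * E2 - (2*(k:S)+2) * a₁ * hgdef
        obtain ⟨u, hu⟩ : (X 1 : S) ^ (2*k+1)
            ∣ ((2*(k:S)+2) * w.1 2 + (2*(k:S)+4) * a₁ * X 2) := by
          refine (primeX 1).pow_dvd_of_dvd_mul_right _ hyc ?_
          exact ⟨-((2*(k:S)+2) * ((2*(k:S)+2) * w.1 1 + a₁ * X 1)), by linear_combination e3⟩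
        have e4 : (X 1 : S) ^ (2*k+1) * ((2*(k:S)+2) * ((2*(k:S)+2) * w.1 1 + a₁ * X 1)
            + (((k:S)+1) * (X 0 ^ (k+1) * X 2 ^ k)) * u) = (X 1 : S) ^ (2*k+1) * 0 := by
          rw [mul_zero]
          linear_combination e3 - (((k:S)+1) * (X 0 ^ (k+1) * X 2 ^ k)) * hu
        have hA := mul_left_cancel₀
          (pow_ne_zero _ (X_ne_zero (1 : Fin 3) : (X 1 : S) ≠ 0)) e4
        refine ⟨C ((2*(k:ℂ)+2)⁻¹) * a₁, -(C ((4*(k:ℂ)+4)⁻¹)) * u, ?_⟩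
        apply Subtype.ext
        show (C ((2*(k:ℂ)+2)⁻¹) * a₁) • (![(2*(k:S)+2) * X 0, -X 1, -((2*(k:S)+4) * X 2)] : Fin 3 → S)
            + (-(C ((4*(k:ℂ)+4)⁻¹)) * u) • ![0, X 0 ^ (k+1) * X 2 ^ k, -(2 * X 1 ^ (2*k+1))] = w.1
        funext i
        fin_cases i
        · show (C ((2*(k:ℂ)+2)⁻¹) * a₁) * ((2*(k:S)+2) * X 0)
              + (-(C ((4*(k:ℂ)+4)⁻¹)) * u) * 0 = w.1 0
          linear_combination (-1 : S) * ha + a₁ * X 0 * hC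
        · show (C ((2*(k:ℂ)+2)⁻¹) * a₁) * (-X 1)
              + (-(C ((4*(k:ℂ)+4)⁻¹)) * u) * (X 0 ^ (k+1) * X 2 ^ k) = w.1 1
          refine mul_left_cancel₀ (mul_ne_zero hk22 hk22) ?_
          linear_combination (-1 : S) * hA - (2*(k:S)+2) * a₁ * (X 1) * hC
            - ((k:S)+1) * u * (X 0 ^ (k+1) * X 2 ^ k) * hC2
        · show (C ((2*(k:ℂ)+2)⁻¹) * a₁) * (-((2*(k:S)+4) * X 2))
              + (-(C ((4*(k:ℂ)+4)⁻¹)) * u) * (-(2 * X 1 ^ (2*k+1))) = w.1 2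
          refine mul_left_cancel₀ hk22 ?_
          linear_combination (-1 : S) * hu - (2*(k:S)+4) * a₁ * (X 2) * hC
            + u * (X 1 ^ (2*k+1)) * hC2)
    refine ⟨B, ?_, ?_⟩
    · rw [hB0]
      intro i
      fin_cases i
      · show ((2*(k:S)+2) * X 0).IsHomogeneous 1
        have h2 : (2*(k:S)+2) = C (2*(k:ℂ)+2) := by
          rw [show (2*(k:ℂ)+2) = ((2*k+2 : ℕ) : ℂ) by push_cast; ring, map_natCast]
          push_cast
          ring
        rw [h2]
        exact homog_adj ((isHomogeneous_C (Fin 3) (2*(k:ℂ)+2)).mul (isHomogeneous_X ℂ 0))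
          (by ring)
      · show (-X 1 : S).IsHomogeneous 1
        exact (isHomogeneous_X ℂ 1).neg
      · show (-((2*(k:S)+4) * X 2)).IsHomogeneous 1
        apply MvPolynomial.IsHomogeneous.neg
        have h2 : (2*(k:S)+4) = C (2*(k:ℂ)+4) := by
          rw [show (2*(k:ℂ)+4) = ((2*k+4 : ℕ) : ℂ) by push_cast; ring, map_natCast]
          push_cast
          ring
        rw [h2]
        exact homog_adj ((isHomogeneous_C (Fin 3) (2*(k:ℂ)+4)).mul (isHomogeneous_X ℂ 2))
          (by ring)
    · rw [hB1, hdd]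
      intro i
      fin_cases i
      · show (0 : S).IsHomogeneous (2*k+1)
        exact isHomogeneous_zero (Fin 3) ℂ _
      · show ((X 0 : S) ^ (k+1) * X 2 ^ k).IsHomogeneous (2*k+1)
        exact homog_adj (((isHomogeneous_X ℂ 0).pow (k+1)).mul ((isHomogeneous_X ℂ 2).pow k))
          (by ring)
      · show (-(2 * X 1 ^ (2*k+1)) : S).IsHomogeneous (2*k+1)
        apply MvPolynomial.IsHomogeneous.neg
        rw [show (2 : S) = C (2 : ℂ) from (map_ofNat C 2).symm]
        exact homog_adj ((isHomogeneous_C (Fin 3) (2:ℂ)).mul ((isHomogeneous_X ℂ 1).pow (2*k+1)))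
          (by ring)
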